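/- Let Q be a finite set with matrices A_q (n×n), and let P be symmetric positive definite with P − A_qᵀPA_q positive definite for all q ∈ Q. Then for any family of positive semidefinite matrices M_q, q ∈ Q, there exists a symmetric positive definite matrix 𝒮 with A_qᵀ𝒮A_q + M_q − 𝒮 negative definite for all q ∈ Q. -/

import Mathlib

open Matrix

private lemma quad_cont {n : ℕ} (M : Matrix (Fin n) (Fin n) ℝ) :
    Continuous fun x : Fin n → ℝ => x ⬝ᵥ (M *ᵥ x) := by
  simp only [dotProduct, mulVec]
  exact continuous_finset_sum _ fun i _ =>
    (continuous_apply i).mul (continuous_finset_sum _ fun j _ =>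
      continuous_const.mul (continuous_apply j))

private lemma quad_smul {n : ℕ} (M : Matrix (Fin n) (Fin n) ℝ) (a : ℝ) (x : Fin n → ℝ) :
    (a • x) ⬝ᵥ (M *ᵥ (a • x)) = a ^ 2 * (x ⬝ᵥ (M *ᵥ x)) := by
  rw [mulVec_smul, smul_dotProduct, dotProduct_smul, smul_eq_mul, smul_eq_mul]
  ring

private lemma key {n : ℕ} (B M : Matrix (Fin n) (Fin n) ℝ)
    (hB : ∀ x : Fin n → ℝ, x ≠ 0 → 0 < x ⬝ᵥ (B *ᵥ x))
    (hM : ∀ x : Fin n → ℝ, 0 ≤ x ⬝ᵥ (M *ᵥ x)) :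
    ∃ c : ℝ, 0 < c ∧ ∀ x : Fin n → ℝ, x ≠ 0 → x ⬝ᵥ (M *ᵥ x) < c * (x ⬝ᵥ (B *ᵥ x)) := by
  by_cases hn : ∃ x : Fin n → ℝ, x ≠ 0
  swap
  · exact ⟨1, one_pos, fun x hx => absurd ⟨x, hx⟩ hn⟩
  obtain ⟨x₀, hx₀⟩ := hn
  have hsne : (Metric.sphere (0 : Fin n → ℝ) 1).Nonempty := by
    refine ⟨‖x₀‖⁻¹ • x₀, ?_⟩
    simp [norm_smul, inv_mul_cancel₀ (norm_ne_zero_iff.2 hx₀)]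
  have hsc : IsCompact (Metric.sphere (0 : Fin n → ℝ) 1) := isCompact_sphere 0 1
  obtain ⟨um, humS, hum⟩ := hsc.exists_isMinOn hsne ((quad_cont B).continuousOn)
  obtain ⟨uM, huMS, huM⟩ := hsc.exists_isMaxOn hsne ((quad_cont M).continuousOn)
  have humne : um ≠ 0 := by
    intro h
    have := mem_sphere_zero_iff_norm.1 humS
    rw [h] at this; simp at this
  set m := um ⬝ᵥ (B *ᵥ um) with hm
  set K := uM ⬝ᵥ (M *ᵥ uM) with hK
  have hmpos : 0 < m := hB um humne
  have hKnn : 0 ≤ K := hM uM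
  refine ⟨(K + 1) / m, by positivity, fun x hx => ?_⟩
  set u : Fin n → ℝ := ‖x‖⁻¹ • x with hu
  have hxn : ‖x‖ ≠ 0 := norm_ne_zero_iff.2 hx
  have huS : u ∈ Metric.sphere (0 : Fin n → ℝ) 1 := by
    simp [hu, norm_smul, inv_mul_cancel₀ hxn]
  have h1 : u ⬝ᵥ (M *ᵥ u) ≤ K := huM huS
  have h2 : m ≤ u ⬝ᵥ (B *ᵥ u) := hum huS
  have hxu : x = ‖x‖ • u := by
    rw [hu, smul_smul, mul_inv_cancel₀ hxn, one_smul]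
  have hM' : x ⬝ᵥ (M *ᵥ x) = ‖x‖ ^ 2 * (u ⬝ᵥ (M *ᵥ u)) := by
    conv_lhs => rw [hxu]; rw [quad_smul]
  have hB' : x ⬝ᵥ (B *ᵥ x) = ‖x‖ ^ 2 * (u ⬝ᵥ (B *ᵥ u)) := by
    conv_lhs => rw [hxu]; rw [quad_smul]
  have hns : (0:ℝ) < ‖x‖ ^ 2 := by positivity
  rw [hM', hB']
  have hchain : ‖x‖ ^ 2 * (u ⬝ᵥ (M *ᵥ u)) ≤ ‖x‖ ^ 2 * K := by nlinarith
  have hcm : (K + 1) / m * m = K + 1 := div_mul_cancel₀ _ (ne_of_gt hmpos)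
  have hcpos : (0:ℝ) < (K + 1) / m := by positivity
  nlinarith [mul_le_mul_of_nonneg_left h2 (le_of_lt hcpos)]

/-- If `P − A_qᵀPA_q > 0` for all `q` (P symmetric positive
definite), then for any family of positive semidefinite matrices `M_q` there is
a symmetric positive definite `𝒮` with `A_qᵀ𝒮A_q + M_q − 𝒮 < 0` for all `q`. -/
theorem stmt6 {n : ℕ} {Q : Type*} [Fintype Q]
    (A : Q → Matrix (Fin n) (Fin n) ℝ) (P : Matrix (Fin n) (Fin n) ℝ)
    (hP : P.PosDef)
    (hstab : ∀ q : Q, (P - (A q)ᵀ * P * A q).PosDef)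
    (M : Q → Matrix (Fin n) (Fin n) ℝ) (hM : ∀ q, (M q).PosSemidef) :
    ∃ 𝒮 : Matrix (Fin n) (Fin n) ℝ, 𝒮.PosDef ∧
      ∀ q : Q, ∀ x : Fin n → ℝ, x ≠ 0 →
        x ⬝ᵥ (((A q)ᵀ * 𝒮 * A q + M q - 𝒮) *ᵥ x) < 0 := by
  have hq : ∀ q : Q, ∃ c : ℝ, 0 < c ∧ ∀ x : Fin n → ℝ, x ≠ 0 →
      x ⬝ᵥ (M q *ᵥ x) < c * (x ⬝ᵥ ((P - (A q)ᵀ * P * A q) *ᵥ x)) := by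
    intro q
    refine key _ _ (fun x hx => ?_) (fun x => ?_)
    · have := (hstab q).dotProduct_mulVec_pos hx
      simpa using this
    · have := (hM q).dotProduct_mulVec_nonneg x
      simpa using this
  choose c hc0 hc using hq
  set C : ℝ := 1 + ∑ q : Q, c q with hC
  have hCpos : 0 < C := by
    have : 0 ≤ ∑ q : Q, c q := Finset.sum_nonneg fun q _ => (hc0 q).le
    positivity
  have hCge : ∀ q : Q, c q ≤ C := by
    intro q
    have h1 : c q ≤ ∑ q : Q, c q :=
      Finset.single_le_sum (fun q _ => (hc0 q).le) (Finset.mem_univ q)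
    linarith
  have hSpd : (C • P).PosDef := by
    refine Matrix.PosDef.of_dotProduct_mulVec_pos (by rw [Matrix.IsHermitian, conjTranspose_smul, hP.1]; simp) fun x hx => ?_
    rw [smul_mulVec, dotProduct_smul, smul_eq_mul]
    exact mul_pos hCpos (by simpa using hP.dotProduct_mulVec_pos hx)
  refine ⟨C • P, hSpd, fun q x hx => ?_⟩
  have hlt := hc q x hx
  have hPq : 0 < x ⬝ᵥ ((P - (A q)ᵀ * P * A q) *ᵥ x) := by
    have := (hstab q).dotProduct_mulVec_pos hx
    simpa using this
  have hPq' : x ⬝ᵥ ((P - (A q)ᵀ * P * A q) *ᵥ x)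
      = x ⬝ᵥ (P *ᵥ x) - x ⬝ᵥ (((A q)ᵀ * P * A q) *ᵥ x) := by
    rw [sub_mulVec, dotProduct_sub]
  have hCineq : c q * (x ⬝ᵥ ((P - (A q)ᵀ * P * A q) *ᵥ x))
      ≤ C * (x ⬝ᵥ ((P - (A q)ᵀ * P * A q) *ᵥ x)) := by
    exact mul_le_mul_of_nonneg_right (hCge q) hPq.le
  have hexp : x ⬝ᵥ (((A q)ᵀ * (C • P) * A q + M q - C • P) *ᵥ x)
      = C * (x ⬝ᵥ (((A q)ᵀ * P * A q) *ᵥ x)) + x ⬝ᵥ (M q *ᵥ x) - C * (x ⬝ᵥ (P *ᵥ x)) := by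
    have h1 : (A q)ᵀ * (C • P) * A q = C • ((A q)ᵀ * P * A q) := by
      rw [mul_smul_comm, smul_mul_assoc]
    rw [h1, sub_mulVec, add_mulVec, dotProduct_sub, dotProduct_add,
      smul_mulVec, smul_mulVec, dotProduct_smul, dotProduct_smul,
      smul_eq_mul, smul_eq_mul]
  rw [hexp]
  rw [hPq'] at hlt hCineq
  nlinarith
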